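/- (Remark 1.2) Let f : ℝ → ℝ be continuous with F(t) = ∫₀^t f(τ) dτ, and assume (f4): the map t ↦ f(t)/|t| is strictly increasing on ℝ∖{0}. Then the function G(t) = ½ f(t)t − F(t) is strictly increasing for t > 0 (i.e. strictly increasing on (0,∞)) and strictly decreasing for t < 0 (i.e. strictly decreasing on (−∞,0)). -/

import Mathlib

open MeasureTheory Filter

noncomputable section

namespace ZeroMass

/-- The ambient Euclidean space `ℝ^N`. -/
abbrev EN (N : ℕ) := EuclideanSpace ℝ (Fin N)

/-- The critical fractional Sobolev exponent `2*_α = 2N/(N-2α)`. -/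
def critExp (N : ℕ) (α : ℝ) : ℝ := 2 * N / (N - 2 * α)

/-- The square of the Gagliardo seminorm `[u]²`. -/
def gagSq (N : ℕ) (α : ℝ) (u : EN N → ℝ) : ENNReal :=
  ∫⁻ p : EN N × EN N, ENNReal.ofReal ((u p.1 - u p.2) ^ 2 / ‖p.1 - p.2‖ ^ ((N : ℝ) + 2 * α))

/-- The square of the full norm `‖u‖² = [u]² + ∫ V u²`. -/
def normSq {N : ℕ} (α : ℝ) (V : EN N → ℝ) (u : EN N → ℝ) : ENNReal :=
  gagSq N α u + ∫⁻ x, ENNReal.ofReal (V x * u x ^ 2)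

/-- Membership in the space `X`. -/
def memX {N : ℕ} (α : ℝ) (V : EN N → ℝ) (u : EN N → ℝ) : Prop :=
  Measurable u ∧ normSq α V u < ⊤

/-- The norm of `X`, i.e. `‖u‖ = ([u]² + ∫ V u²)^{1/2}`. -/
def Xnorm {N : ℕ} (α : ℝ) (V : EN N → ℝ) (u : EN N → ℝ) : ℝ :=
  ((normSq α V u).toReal) ^ (1 / 2 : ℝ)

/-- The primitive `F(t) = ∫₀ᵗ f(τ) dτ`. -/
def prim (f : ℝ → ℝ) (t : ℝ) : ℝ := ∫ τ in (0 : ℝ)..t, f τ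

/-- The energy functional `J`. -/
def Jfun {N : ℕ} (α : ℝ) (V K : EN N → ℝ) (f : ℝ → ℝ) (u : EN N → ℝ) : ℝ :=
  (1 / 2) * (normSq α V u).toReal - ∫ x, K x * prim f (u x)

/-- The pairing `⟨J'(u), φ⟩`. -/
def Jd {N : ℕ} (α : ℝ) (V K : EN N → ℝ) (f : ℝ → ℝ) (u φ : EN N → ℝ) : ℝ :=
  (∫ p : EN N × EN N, (u p.1 - u p.2) * (φ p.1 - φ p.2) / ‖p.1 - p.2‖ ^ ((N : ℝ) + 2 * α))
    + (∫ x, V x * u x * φ x) - ∫ x, K x * f (u x) * φ x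

/-- Positive part `u⁺ = max(u, 0)`. -/
def uplus {N : ℕ} (u : EN N → ℝ) : EN N → ℝ := fun x => max (u x) 0

/-- Negative part `u⁻ = min(u, 0)`. -/
def uminus {N : ℕ} (u : EN N → ℝ) : EN N → ℝ := fun x => min (u x) 0

/-- `u` is not almost everywhere zero. -/
def NotAEZero {N : ℕ} (u : EN N → ℝ) : Prop :=
  ¬ (u =ᵐ[(volume : Measure (EN N))] (0 : EN N → ℝ))

/-- Hypothesis (h1): `V, K > 0` everywhere and `K` bounded. -/
def H1 {N : ℕ} (V K : EN N → ℝ) : Prop :=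
  (∀ x, 0 < V x) ∧ (∀ x, 0 < K x) ∧ ∃ C : ℝ, ∀ x, K x ≤ C

/-- Hypothesis (h2): uniform vanishing of `∫_{A_n ∩ {|x| ≥ r}} K`. -/
def H2 {N : ℕ} (K : EN N → ℝ) : Prop :=
  ∀ (A : ℕ → Set (EN N)) (R : ℝ), 0 < R → (∀ n, MeasurableSet (A n)) →
    (∀ n, volume (A n) ≤ ENNReal.ofReal R) →
    ∀ ε : ℝ, 0 < ε → ∃ r₀ : ℝ, ∀ r : ℝ, r₀ ≤ r → ∀ n,
      (∫⁻ x in A n ∩ {x : EN N | r ≤ ‖x‖}, ENNReal.ofReal (K x)) ≤ ENNReal.ofReal ε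

/-- Hypothesis (h3): `K/V` is bounded. -/
def H3 {N : ℕ} (V K : EN N → ℝ) : Prop := ∃ C : ℝ, ∀ x, K x / V x ≤ C

/-- Hypothesis (h4) with exponent `m`. -/
def H4 {N : ℕ} (α : ℝ) (V K : EN N → ℝ) (m : ℝ) : Prop :=
  2 < m ∧ m < critExp N α ∧
    Tendsto (fun x : EN N => K x / V x ^ ((critExp N α - m) / (critExp N α - 2)))
      (comap (fun x : EN N => ‖x‖) atTop) (nhds 0)

/-- Hypothesis (f1): `f(t)/|t| → 0` as `t → 0`. -/
def Cf1 (f : ℝ → ℝ) : Prop :=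
  Tendsto (fun t : ℝ => f t / |t|) (nhdsWithin 0 {(0 : ℝ)}ᶜ) (nhds 0)

/-- Hypothesis (f̃1): `limsup_{t→0} f(t)/|t|^{m-1} < ∞`. -/
def Cf1' (f : ℝ → ℝ) (m : ℝ) : Prop :=
  ∃ C : ℝ, ∀ᶠ t in nhdsWithin (0 : ℝ) {(0 : ℝ)}ᶜ, f t / |t| ^ (m - 1) ≤ C

/-- Hypothesis (f2) with exponent `p`: `f(t)/|t|^{p-1} → 0` as `|t| → ∞`. -/
def Cf2 (f : ℝ → ℝ) (p : ℝ) : Prop :=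
  Tendsto (fun t : ℝ => f t / |t| ^ (p - 1)) (comap (fun t : ℝ => |t|) atTop) (nhds 0)

/-- Hypothesis (f3): `F(t)/t² → +∞` as `|t| → ∞`. -/
def Cf3 (f : ℝ → ℝ) : Prop :=
  Tendsto (fun t : ℝ => prim f t / t ^ 2) (comap (fun t : ℝ => |t|) atTop) atTop

/-- Hypothesis (f4): `t ↦ f(t)/|t|` is strictly increasing on `ℝ \ {0}`. -/
def Cf4 (f : ℝ → ℝ) : Prop :=
  ∀ s t : ℝ, s ≠ 0 → t ≠ 0 → s < t → f s / |s| < f t / |t|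

/-- Nehari manifold membership, formulated with the pairing `⟨J'(u), u⟩ = 0`. -/
def memNehari {N : ℕ} (α : ℝ) (V K : EN N → ℝ) (f : ℝ → ℝ) (u : EN N → ℝ) : Prop :=
  memX α V u ∧ NotAEZero u ∧ Jd α V K f u u = 0

/-- Nehari manifold membership, formulated as `‖u‖² = ∫ K f(u) u`. -/
def memNehari2 {N : ℕ} (α : ℝ) (V K : EN N → ℝ) (f : ℝ → ℝ) (u : EN N → ℝ) : Prop :=
  memX α V u ∧ NotAEZero u ∧ (normSq α V u).toReal = ∫ x, K x * f (u x) * u x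

/-- Nodal (sign-changing) Nehari set membership. -/
def memM {N : ℕ} (α : ℝ) (V K : EN N → ℝ) (f : ℝ → ℝ) (u : EN N → ℝ) : Prop :=
  memNehari α V K f u ∧ NotAEZero (uplus u) ∧ NotAEZero (uminus u) ∧
    Jd α V K f u (uplus u) = 0 ∧ Jd α V K f u (uminus u) = 0

/-- Weak convergence in `X` of the sequence `u` to `w`. -/
def weakConv {N : ℕ} (α : ℝ) (V : EN N → ℝ) (u : ℕ → EN N → ℝ) (w : EN N → ℝ) : Prop :=
  ∀ v : EN N → ℝ, memX α V v →
    Tendsto (fun n =>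
      (∫ p : EN N × EN N,
        ((u n p.1 - w p.1) - (u n p.2 - w p.2)) * (v p.1 - v p.2)
          / ‖p.1 - p.2‖ ^ ((N : ℝ) + 2 * α))
      + ∫ x, V x * (u n x - w x) * v x) atTop (nhds 0)

end ZeroMass

open ZeroMass
/-- Remark 1.2: under (f4), `t ↦ ½ f(t)t − F(t)` is strictly increasing on `(0,∞)`
and strictly decreasing on `(−∞,0)`. -/
theorem statement7 (f : ℝ → ℝ) (hf : Continuous f) (hf4 : Cf4 f) :
    StrictMonoOn (fun t : ℝ => (1 / 2) * f t * t - prim f t) (Set.Ioi (0 : ℝ)) ∧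
    StrictAntiOn (fun t : ℝ => (1 / 2) * f t * t - prim f t) (Set.Iio (0 : ℝ)) := by
  constructor
  · intro s hs t ht hst
    simp only [Set.mem_Ioi] at hs ht
    have hft : f s / s < f t / t := by
      have := hf4 s t (ne_of_gt hs) (ne_of_gt ht) hst
      rwa [abs_of_pos hs, abs_of_pos ht] at this
    have hprim : prim f t = prim f s + ∫ τ in s..t, f τ := by
      unfold prim
      rw [intervalIntegral.integral_add_adjacent_intervals
        (hf.intervalIntegrable 0 s) (hf.intervalIntegrable s t)]
    have hint : (∫ τ in s..t, f τ) ≤ f t / t * ((t ^ 2 - s ^ 2) / 2) := by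
      have hle : ∀ x ∈ Set.Icc s t, f x ≤ (fun τ => f t / t * τ) x := by
        intro x hx
        rcases eq_or_lt_of_le hx.2 with h | h
        · rw [h]; exact le_of_eq (div_mul_cancel₀ (f t) (ne_of_gt ht)).symm
        · have hx0 : 0 < x := lt_of_lt_of_le hs hx.1
          have h2 := hf4 x t (ne_of_gt hx0) (ne_of_gt ht) h
          rw [abs_of_pos hx0, abs_of_pos ht] at h2
          exact le_of_lt ((div_lt_iff₀ hx0).mp h2)
      have h := intervalIntegral.integral_mono_on (μ := volume) hst.le
        (hf.intervalIntegrable s t)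
        ((continuous_const.mul continuous_id).intervalIntegrable s t) hle
      simp only [Pi.mul_apply] at h; rw [intervalIntegral.integral_const_mul] at h; simp only [id] at h; rwa [integral_id] at h
    have h1 : f t / t * t = f t := div_mul_cancel₀ _ (ne_of_gt ht)
    have h2 : f s / s * s = f s := div_mul_cancel₀ _ (ne_of_gt hs)
    have h3 := mul_lt_mul_of_pos_left hft (show (0:ℝ) < s ^ 2 by positivity)
    simp only
    rw [hprim]
    nlinarith [h1, h2, h3, hint]
  · intro s hs t ht hst
    simp only [Set.mem_Iio] at hs ht
    have hft : f s / s > f t / t := by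
      have := hf4 s t (ne_of_lt hs) (ne_of_lt ht) hst
      rw [abs_of_neg hs, abs_of_neg ht] at this
      have hs' : s < 0 := hs
      have ht' : t < 0 := ht
      rw [div_neg, div_neg] at this
      linarith
    have hprim : prim f t = prim f s + ∫ τ in s..t, f τ := by
      unfold prim
      rw [intervalIntegral.integral_add_adjacent_intervals
        (hf.intervalIntegrable 0 s) (hf.intervalIntegrable s t)]
    have hint : f s / s * ((t ^ 2 - s ^ 2) / 2) ≤ (∫ τ in s..t, f τ) := by
      have hle : ∀ x ∈ Set.Icc s t, (fun τ => f s / s * τ) x ≤ f x := by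
        intro x hx
        rcases eq_or_lt_of_le hx.1 with h | h
        · rw [← h]; exact le_of_eq (div_mul_cancel₀ (f s) (ne_of_lt hs))
        · have hx0 : x < 0 := lt_of_le_of_lt hx.2 ht
          have h2 := hf4 s x (ne_of_lt hs) (ne_of_lt hx0) h
          rw [abs_of_neg hs, abs_of_neg hx0, div_neg, div_neg] at h2
          have h3 : f x / x < f s / s := by linarith
          -- x < 0 : from f x / x < f s / s, multiply by x < 0 flips
          nlinarith [mul_lt_mul_of_neg_left h3 hx0, div_mul_cancel₀ (f x) (ne_of_lt hx0), mul_comm x (f s / s)]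
      have h := intervalIntegral.integral_mono_on (μ := volume) hst.le
        ((continuous_const.mul continuous_id).intervalIntegrable s t)
        (hf.intervalIntegrable s t) hle
      simp only [Pi.mul_apply] at h; rw [intervalIntegral.integral_const_mul] at h; simp only [id] at h; rwa [integral_id] at h
    have h1 : f t / t * t = f t := div_mul_cancel₀ _ (ne_of_lt ht)
    have h2 : f s / s * s = f s := div_mul_cancel₀ _ (ne_of_lt hs)
    have h3 := mul_lt_mul_of_pos_left hft (show (0:ℝ) < t ^ 2 by nlinarith)
    simp only
    rw [hprim]
    nlinarith [h1, h2, h3, hint]
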